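/- Set λ_α := −4e^{−2γ} and 𝓒_α := 4√π·e^{−γ}, and define Ẑ₂(p) := (i𝓒_α/(4π))·(log p − log(−λ_α) − iπ/2)/(p + iλ_α) for p ≠ 0, p ≠ −iλ_α. Then there exist an open set U ⊆ ℂ containing {p ∈ ℂ : Re(p) ≥ 0, p ≠ 0} and an analytic function G on U such that G(p) = Ẑ₂(p) for every p ∈ U with p ≠ −iλ_α (i.e. the singularity of Ẑ₂ at p = −iλ_α is removable), and G(p) ≠ 0 for every p with Re(p) ≥ 0 and p ≠ 0. -/

import Mathlib

open MeasureTheory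

/-- `λ_α := -4 e^{-2γ}`, with `γ` the Euler–Mascheroni constant. -/
noncomputable def lamAlpha : ℝ := -4 * Real.exp (-2 * Real.eulerMascheroniConstant)

/-- `𝓒_α := 4 √π e^{-γ}`. -/
noncomputable def CAlpha : ℝ := 4 * Real.sqrt Real.pi * Real.exp (-Real.eulerMascheroniConstant)

/-- `Ẑ₂(p) := (i𝓒_α/(4π)) (log p - log(-λ_α) - iπ/2)/(p + iλ_α)`. -/
noncomputable def Zhat2 (p : ℂ) : ℂ :=
  (Complex.I * (CAlpha : ℂ) / (4 * (Real.pi : ℂ))) *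
    ((Complex.log p - Complex.log (-(lamAlpha : ℂ)) - Complex.I * (Real.pi : ℂ) / 2) /
      (p + Complex.I * (lamAlpha : ℂ)))

lemma lamAlpha_neg : lamAlpha < 0 := by
  have := Real.exp_pos (-2 * Real.eulerMascheroniConstant)
  unfold lamAlpha; nlinarith

noncomputable def p₀ : ℂ := -(Complex.I * (lamAlpha : ℂ))

lemma p0_eq : p₀ = ((-lamAlpha : ℝ) : ℂ) * Complex.I := by
  simp [p₀]; ring

lemma p0_mem : p₀ ∈ Complex.slitPlane := by
  rw [p0_eq]
  refine Or.inr ?_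
  simp [Complex.mul_im, lamAlpha_neg.ne]

lemma p0_ne : p₀ ≠ 0 := Complex.slitPlane_ne_zero p0_mem

lemma log_p0 : Complex.log p₀ =
    Complex.log (-(lamAlpha : ℂ)) + Complex.I * (Real.pi : ℂ) / 2 := by
  have hr : (0:ℝ) < -lamAlpha := by linarith [lamAlpha_neg]
  rw [p0_eq, Complex.log_ofReal_mul hr Complex.I_ne_zero, Complex.log_I,
    Complex.ofReal_log hr.le]
  push_cast
  ring

/-- `Ẑ₂` extends analytically to an open set containing the punctured closed right half-plane
(the singularity at `p = -iλ_α` being removable), and the extension does not vanish at any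
`p` with `Re p ≥ 0`, `p ≠ 0`. -/
theorem Zhat2_analytic_nonvanishing :
    ∃ U : Set ℂ, ∃ G : ℂ → ℂ,
      IsOpen U ∧
      {p : ℂ | 0 ≤ p.re ∧ p ≠ 0} ⊆ U ∧
      AnalyticOnNhd ℂ G U ∧
      (∀ p ∈ U, p ≠ -(Complex.I * (lamAlpha : ℂ)) → G p = Zhat2 p) ∧
      (∀ p : ℂ, 0 ≤ p.re → p ≠ 0 → G p ≠ 0) := by
  set c : ℂ := Complex.I * (CAlpha : ℂ) / (4 * (Real.pi : ℂ)) with hc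
  have hCpos : (0:ℝ) < CAlpha := by
    have h1 := Real.sqrt_pos.mpr Real.pi_pos
    have h2 := Real.exp_pos (-Real.eulerMascheroniConstant)
    unfold CAlpha; positivity
  have hcne : c ≠ 0 := by
    apply div_ne_zero
    · exact mul_ne_zero Complex.I_ne_zero (by exact_mod_cast hCpos.ne')
    · simp [Complex.ext_iff, Real.pi_ne_zero]
  refine ⟨Complex.slitPlane, fun p => c * dslope Complex.log p₀ p,
    Complex.isOpen_slitPlane, ?_, ?_, ?_, ?_⟩
  · rintro p ⟨hre, hne⟩
    rcases lt_or_eq_of_le hre with h | h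
    · exact Or.inl h
    · refine Or.inr ?_
      intro him
      exact hne (Complex.ext h.symm him)
  · intro p hp
    by_cases hpp : p = p₀
    · subst hpp
      have hlog : AnalyticAt ℂ Complex.log p₀ := analyticAt_clog p0_mem
      obtain ⟨s, hs⟩ := hlog
      exact analyticAt_const.mul hs.has_fpower_series_dslope_fslope.analyticAt
    · have hA : AnalyticAt ℂ (fun q => (q - p₀)⁻¹ * (Complex.log q - Complex.log p₀)) p := by
        refine AnalyticAt.mul ?_ ?_
        · exact ((analyticAt_id.sub analyticAt_const).inv (sub_ne_zero.mpr hpp))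
        · exact (analyticAt_clog hp).sub analyticAt_const
      refine ((analyticAt_const (v := c)).mul hA).congr ?_
      filter_upwards [isOpen_compl_singleton.eventually_mem hpp] with q hq
      rw [dslope_of_ne _ hq, slope_def_field]
      simp [div_eq_inv_mul]
  · intro p hp hne
    have hne' : p ≠ p₀ := hne
    show c * dslope Complex.log p₀ p = Zhat2 p
    rw [dslope_of_ne _ hne', slope_def_field, Zhat2, log_p0]
    have : p - p₀ = p + Complex.I * (lamAlpha : ℂ) := by simp [p₀]
    rw [this, hc]
    ring_nf
  · intro p hre hne
    have hp : p ∈ Complex.slitPlane := by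
      rcases lt_or_eq_of_le hre with h | h
      · exact Or.inl h
      · exact Or.inr fun him => hne (Complex.ext h.symm him)
    by_cases hpp : p = p₀
    · subst hpp
      show c * dslope Complex.log p₀ p₀ ≠ 0
      rw [dslope_same]
      have hd : deriv Complex.log p₀ = p₀⁻¹ := (Complex.hasDerivAt_log p0_mem).deriv
      rw [hd]
      exact mul_ne_zero hcne (inv_ne_zero p0_ne)
    · show c * dslope Complex.log p₀ p ≠ 0
      rw [dslope_of_ne _ hpp, slope_def_field]
      have hlogne : Complex.log p - Complex.log p₀ ≠ 0 := by
        intro h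
        apply hpp
        have := congrArg Complex.exp (sub_eq_zero.mp h)
        rwa [Complex.exp_log hne, Complex.exp_log p0_ne] at this
      exact mul_ne_zero hcne (div_ne_zero hlogne (sub_ne_zero.mpr hpp))
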